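/- Let E ⊆ ℝ be a set such that for some nonempty perfect set Q, every nonempty perfect subset of Q meets E in a set of cardinality continuum. Then there exists an ARD set F ⊆ E meeting every perfect set P with |P ∩ E| = 𝔠 (where 𝔠 is the continuum). -/

import Mathlib

open Cardinal Set Metric

def ARD (B : Set ℝ) : Prop := ∀ x ∈ B, ∀ y ∈ B, x ≠ y → Irrational |x - y|

theorem stmt8 (E : Set ℝ) (Q : Set ℝ) (hQ : Perfect Q) (hQne : Q.Nonempty)
    (h : ∀ P : Set ℝ, Perfect P → P.Nonempty → P ⊆ Q →
      Cardinal.mk ↥(P ∩ E) = Cardinal.continuum) :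
    ∃ F ⊆ E, ARD F ∧
      ∀ P : Set ℝ, Perfect P → P.Nonempty →
        Cardinal.mk ↥(P ∩ E) = Cardinal.continuum → (F ∩ P).Nonempty := by
  classical
  -- the index type: all perfect sets meeting `E` in continuum-many points
  set ι := {P : Set ℝ // Perfect P ∧ P.Nonempty ∧ #↥(P ∩ E) = continuum} with hιdef
  -- there are at most continuum many of them
  have hcard : #ι ≤ continuum := by
    have hinj : Function.Injective (fun (P : ι) (q : ℚ) => infDist (q : ℝ) P.1) := by
      intro A B hAB
      have hd : ∀ x : ℝ, infDist x A.1 = infDist x B.1 := by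
        have := Continuous.ext_on Rat.denseRange_cast
          (continuous_infDist_pt A.1) (continuous_infDist_pt B.1) ?_
        · exact fun x => congrFun this x
        · rintro _ ⟨q, rfl⟩
          exact congrFun hAB q
      apply Subtype.ext
      ext x
      rw [A.2.1.closed.mem_iff_infDist_zero A.2.2.1,
        B.2.1.closed.mem_iff_infDist_zero B.2.2.1, hd x]
    calc #ι ≤ #(ℚ → ℝ) := Cardinal.mk_le_of_injective hinj
      _ = continuum ^ aleph0 := by
        rw [← Cardinal.power_def, Cardinal.mk_real, Cardinal.mk_denumerable ℚ]
      _ = continuum := continuum_power_aleph0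
  -- a well-order on ι with small initial segments
  obtain ⟨r, wo, hr⟩ := Cardinal.ord_eq ι
  have hseg : ∀ i : ι, #{j : ι // r j i} < continuum := by
    intro i
    have h1 := Cardinal.card_typein_lt (r := r) i hr
    rw [Ordinal.card_typein] at h1
    exact lt_of_lt_of_le h1 hcard
  -- key step: we can always choose a new point
  have key : ∀ (i : ι) (g : ∀ j, r j i → ℝ),
      ((i.1 ∩ E) \ ⋃ (j : {j : ι // r j i}), range (fun q : ℚ => g j.1 j.2 + q)).Nonempty := by
    intro i g
    rw [Set.nonempty_iff_ne_empty]
    intro hemp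
    rw [Set.diff_eq_empty] at hemp
    have h1 : #↥(i.1 ∩ E) ≤ #↥(⋃ (j : {j : ι // r j i}), range (fun q : ℚ => g j.1 j.2 + q)) :=
      Cardinal.mk_le_mk_of_subset hemp
    have h2 : #↥(⋃ (j : {j : ι // r j i}), range (fun q : ℚ => g j.1 j.2 + q)) < continuum := by
      refine lt_of_le_of_lt (Cardinal.mk_iUnion_le _) ?_
      have hsup : ⨆ (j : {j : ι // r j i}), #↥(range (fun q : ℚ => g j.1 j.2 + q)) ≤ ℵ₀ :=
        ciSup_le' fun j => (Set.countable_range _).le_aleph0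
      calc #{j : ι // r j i} * ⨆ (j : {j : ι // r j i}), #↥(range (fun q : ℚ => g j.1 j.2 + q))
          ≤ #{j : ι // r j i} * ℵ₀ := mul_le_mul_right hsup _
        _ ≤ max (max #{j : ι // r j i} ℵ₀) ℵ₀ := Cardinal.mul_le_max _ _
        _ < continuum :=
            max_lt (max_lt (hseg i) Cardinal.aleph0_lt_continuum) Cardinal.aleph0_lt_continuum
    rw [i.2.2.2] at h1
    exact absurd (lt_of_le_of_lt h1 h2) (lt_irrefl _)
  -- define the transfinite choice function
  have wf : WellFounded r := wo.wf
  let step : ∀ i : ι, (∀ j, r j i → ℝ) → ℝ := fun i g => (key i g).choose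
  let f : ι → ℝ := wf.fix step
  have hfix : ∀ i, f i = step i (fun j _ => f j) := fun i => wf.fix_eq step i
  have hmem : ∀ i : ι, f i ∈ i.1 ∩ E ∧ ∀ j, r j i → ∀ q : ℚ, f i ≠ f j + q := by
    intro i
    have hspec := (key i (fun j _ => f j)).choose_spec
    rw [show (key i (fun j _ => f j)).choose = f i from (hfix i).symm] at hspec
    obtain ⟨h1, h2⟩ := hspec
    refine ⟨h1, fun j hj q hq => h2 ?_⟩
    exact Set.mem_iUnion.2 ⟨⟨j, hj⟩, ⟨q, hq.symm⟩⟩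
  -- the key irrationality fact
  have key2 : ∀ a b : ι, r b a → Irrational (f a - f b) := by
    intro a b hab
    rintro ⟨q, hq⟩
    exact (hmem a).2 b hab q (by linarith [hq])
  refine ⟨Set.range f, ?_, ?_, ?_⟩
  · rintro _ ⟨i, rfl⟩
    exact (hmem i).1.2
  · rintro x ⟨i, rfl⟩ y ⟨j, rfl⟩ hne
    rcases trichotomous_of r j i with hji | heq | hij
    · rcases abs_cases (f i - f j) with ⟨hc, _⟩ | ⟨hc, _⟩
      · rw [hc]; exact key2 i j hji
      · rw [hc]; exact (key2 i j hji).neg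
    · exact absurd (by rw [heq]) hne
    · have := key2 j i hij
      rcases abs_cases (f i - f j) with ⟨hc, _⟩ | ⟨hc, _⟩
      · rw [hc, show f i - f j = -(f j - f i) by ring]; exact this.neg
      · rw [hc, show -(f i - f j) = f j - f i by ring]; exact this
  · intro P hP hPne hPcard
    refine ⟨f ⟨P, hP, hPne, hPcard⟩, ⟨⟨P, hP, hPne, hPcard⟩, rfl⟩, ?_⟩
    exact (hmem ⟨P, hP, hPne, hPcard⟩).1.1
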